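/- Let R be a semiartinian von Neumann regular ring with primitive factors artinian. Then the class of weakly R-projective right R-modules is closed under submodules. -/

import Mathlib

universe u

open Submodule

/-- The socle of a module: the supremum of all simple submodules. -/
noncomputable def socle (R : Type u) [Ring R] (M : Type u) [AddCommGroup M] [Module R M] :
    Submodule R M :=
  sSup {S : Submodule R M | IsAtom S}

/-- The Loewy (socle) sequence of a module, defined by transfinite recursion:
`loewy R M 0 = ⊥`, `loewy R M (α+1) / loewy R M α = Soc (M ⧸ loewy R M α)`, and unions
at limit ordinals. -/
noncomputable def loewy (R : Type u) [Ring R] (M : Type u) [AddCommGroup M] [Module R M]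
    (o : Ordinal.{u}) : Submodule R M :=
  o.limitRecOn ⊥ (fun _ N => (socle R (M ⧸ N)).comap N.mkQ)
    (fun o _ IH => ⨆ (b : Ordinal) (h : b < o), IH b h)

/-- The Loewy length of a module: the least ordinal `o` with `loewy R M o = ⊤`. -/
noncomputable def loewyLength (R : Type u) [Ring R] (M : Type u) [AddCommGroup M]
    [Module R M] : Ordinal.{u} :=
  sInf {o : Ordinal | loewy R M o = ⊤}

/-- A ring is semiartinian if every nonzero module has a nonzero socle. -/
def IsSemiartinianRing (R : Type u) [Ring R] : Prop :=
  ∀ (M : Type u) [AddCommGroup M] [Module R M], Nontrivial M → socle R M ≠ ⊥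

/-- A ring is von Neumann regular if for every `r` there is `s` with `r * s * r = r`. -/
def IsVonNeumannRegularRing (R : Type u) [Ring R] : Prop :=
  ∀ r : R, ∃ s : R, r * s * r = r

/-- `R` has primitive factors artinian: for every primitive ideal `P` (= annihilator of a
simple module), the factor `R/P` is artinian. -/
def HasPrimitiveFactorsArtinian (R : Type u) [Ring R] : Prop :=
  ∀ (M : Type u) [AddCommGroup M] [Module R M], IsSimpleModule R M →
    IsArtinian R (R ⧸ (Module.annihilator R M : Submodule R R))

/-- The `α`-th layer of the Loewy sequence of `R`, as a submodule of `R ⧸ loewy R R α`. -/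
noncomputable def loewyLayer (R : Type u) [Ring R] (α : Ordinal.{u}) :
    Submodule R (R ⧸ loewy R R α) :=
  (loewy R R (α + 1)).map (loewy R R α).mkQ

/-- The canonical projection `π_α : S_{α+1} → S_{α+1}/S_α`. -/
noncomputable def layerProj (R : Type u) [Ring R] (α : Ordinal.{u}) :
    (loewy R R (α + 1) : Submodule R R) →ₗ[R] (loewyLayer R α) :=
  LinearMap.codRestrict _ ((loewy R R α).mkQ.comp (loewy R R (α + 1)).subtype)
    (fun x => ⟨(x : R), x.2, rfl⟩)

/-- `M` is weakly `R`-projective: every homomorphism from `M` to a layer `S_{α+1}/S_α`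
(`0 < α`) with finitely generated image factors through `π_α : S_{α+1} → S_{α+1}/S_α`. -/
def IsWeaklyRProjective (R : Type u) [Ring R] (M : Type u) [AddCommGroup M]
    [Module R M] : Prop :=
  ∀ α : Ordinal.{u}, 0 < α →
    ∀ φ : M →ₗ[R] (loewyLayer R α), (LinearMap.range φ).FG →
      ∃ ψ : M →ₗ[R] (loewy R R (α + 1) : Submodule R R), (layerProj R α).comp ψ = φ

/-- `M` is layer projective: for each `0 < α`, every simple submodule of the `α`-th layer of
`M` is isomorphic to a simple (direct summand) submodule of the `α`-th layer of `R`, i.e. the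
`α`-th layer of `M` is a projective `R/S_α`-module. -/
def IsLayerProjective (R : Type u) [Ring R] (M : Type u) [AddCommGroup M]
    [Module R M] : Prop :=
  ∀ α : Ordinal.{u}, 0 < α →
    ∀ T : Submodule R ((loewy R M (α + 1)).map (loewy R M α).mkQ), IsAtom T →
      ∃ T' : Submodule R (loewyLayer R α), IsAtom T' ∧ Nonempty (T ≃ₗ[R] T')

/-- The submodule `M·S` of `M`, generated by all products `s • m` with `s ∈ S`. -/
def smulSub (R : Type u) [Ring R] (M : Type u) [AddCommGroup M] [Module R M]
    (S : Submodule R R) : Submodule R M :=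
  Submodule.span R {x : M | ∃ s ∈ S, ∃ m : M, s • m = x}

section Aux
variable {R : Type u} [Ring R]

lemma ann_mul_mem' {W : Type u} [AddCommGroup W] [Module R W] {p : R}
    (hp : p ∈ Module.annihilator R W) (s : R) : p * s ∈ Module.annihilator R W := by
  rw [Module.mem_annihilator] at hp ⊢
  intro m; rw [mul_smul, hp]

lemma cyclic_isCompl (hvnr : ∀ r : R, ∃ s : R, r * s * r = r)
    (P : Submodule R R) (hP : ∀ p ∈ P, ∀ s : R, p * s ∈ P)
    (x : R ⧸ P) : ∃ c, IsCompl (Submodule.span R {x}) c := by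
  obtain ⟨r, rfl⟩ := P.mkQ_surjective x
  obtain ⟨s, hs⟩ := hvnr r
  set e := s * r with he
  have he2 : e * e = e := by rw [he, mul_assoc, ← mul_assoc r s r, hs]
  have hre : r * e = r := by rw [he, ← mul_assoc, hs]
  have hspan : Submodule.span R {P.mkQ r} = Submodule.span R {P.mkQ e} := by
    apply le_antisymm
    · rw [Submodule.span_singleton_le_iff_mem, Submodule.mem_span_singleton]
      exact ⟨r, by rw [← map_smul, smul_eq_mul, hre]⟩
    · rw [Submodule.span_singleton_le_iff_mem, Submodule.mem_span_singleton]
      exact ⟨s, by rw [← map_smul, smul_eq_mul, he]⟩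
  rw [hspan]
  refine ⟨Submodule.span R {P.mkQ (1 - e)}, ?_, ?_⟩
  · rw [disjoint_def]
    intro z hz1 hz2
    rw [Submodule.mem_span_singleton] at hz1 hz2
    obtain ⟨a, ha⟩ := hz1
    obtain ⟨b, hb⟩ := hz2
    have hker : P ≤ LinearMap.ker (P.mkQ ∘ₗ LinearMap.toSpanSingleton R R e) := by
      intro p hp
      simp only [LinearMap.mem_ker, LinearMap.comp_apply, LinearMap.toSpanSingleton_apply,
        smul_eq_mul, Submodule.mkQ_apply, Submodule.Quotient.mk_eq_zero]
      exact hP p hp e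
    set μ : (R ⧸ P) →ₗ[R] (R ⧸ P) := P.liftQ _ hker with hμ
    have hμ_mk : ∀ a : R, μ (P.mkQ a) = P.mkQ (a * e) := fun a => by
      simp [hμ, Submodule.liftQ_apply]
    have h1 : μ z = z := by
      rw [← ha, map_smul, hμ_mk, he2]
    have h2 : μ z = 0 := by
      rw [← hb, map_smul, hμ_mk, sub_mul, one_mul, he2, sub_self, map_zero, smul_zero]
    rw [← h1, h2]
  · rw [codisjoint_iff, eq_top_iff]
    rintro y -
    obtain ⟨a, rfl⟩ := P.mkQ_surjective y
    rw [show P.mkQ a = a • P.mkQ e + a • P.mkQ (1 - e) by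
      rw [← map_smul, ← map_smul, ← map_add, smul_eq_mul, smul_eq_mul, ← mul_add,
        add_sub_cancel, mul_one]]
    exact add_mem
      (Submodule.mem_sup_left (Submodule.smul_mem _ a (Submodule.mem_span_singleton_self _)))
      (Submodule.mem_sup_right (Submodule.smul_mem _ a (Submodule.mem_span_singleton_self _)))

lemma isSemisimpleModule_of_subsingleton' (A : Type u) [AddCommGroup A] [Module R A]
    [Subsingleton A] : IsSemisimpleModule R A :=
  (isSemisimpleModule_iff R A).mpr ⟨fun a => ⟨⊤, by rw [Subsingleton.elim a ⊥]; exact isCompl_bot_top⟩⟩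

lemma isSemisimpleModule_of_cyclic_isCompl (A : Type u) [AddCommGroup A] [Module R A]
    [IsArtinian R A] (h : ∀ x : A, ∃ c, IsCompl (Submodule.span R {x}) c) :
    IsSemisimpleModule R A := by
  set T : Set (Submodule R A) :=
    {n | ∃ s : Submodule R A, IsSemisimpleModule R s ∧ IsCompl s n} with hT
  have htop : (⊤ : Submodule R A) ∈ T :=
    ⟨⊥, isSemisimpleModule_of_subsingleton' _, isCompl_bot_top⟩
  obtain ⟨n, hn, hmin⟩ := IsArtinian.set_has_minimal T ⟨⊤, htop⟩
  obtain ⟨s, hss, hcompl⟩ := hn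
  rcases eq_or_ne n ⊥ with rfl | hne
  · have hstop : s = ⊤ := by
      have := codisjoint_iff.mp hcompl.codisjoint; rwa [sup_bot_eq] at this
    subst hstop
    exact IsSemisimpleModule.congr (Submodule.topEquiv).symm
  · exfalso
    haveI : IsAtomic (Submodule R A) :=
      isAtomic_of_orderBot_wellFounded_lt (wellFounded_lt (α := Submodule R A))
    obtain ⟨B, hB, hBn⟩ := (IsAtomic.eq_bot_or_exists_atom_le n).resolve_left hne
    obtain ⟨y, hyB, hy0⟩ := Submodule.ne_bot_iff B |>.mp hB.1
    have hBy : Submodule.span R {y} = B := by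
      rcases (lt_or_eq_of_le ((Submodule.span_singleton_le_iff_mem y B).mpr hyB)) with hlt | heq
      · exact absurd (hB.2 _ hlt) (by simpa [Submodule.span_singleton_eq_bot] using hy0)
      · exact heq
    obtain ⟨B', hBB'⟩ := h y
    rw [hBy] at hBB'
    have hBsimple : IsSemisimpleModule R B := by
      haveI : IsSimpleModule R B := isSimpleModule_iff_isAtom.mpr hB
      infer_instance
    have hs' : IsSemisimpleModule R ↥(s ⊔ B) := IsSemisimpleModule.sup hss hBsimple
    have hnew : IsCompl (s ⊔ B) (n ⊓ B') := by
      constructor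
      · rw [disjoint_def]
        intro z hz1 hz2
        have h1 : (s ⊔ B) ⊓ n = B := by
          rw [sup_comm, sup_inf_assoc_of_le s hBn, hcompl.disjoint.eq_bot, sup_bot_eq]
        have hzB : z ∈ B ⊓ B' := ⟨h1 ▸ Submodule.mem_inf.mpr ⟨hz1, hz2.1⟩, hz2.2⟩
        rwa [hBB'.disjoint.eq_bot, Submodule.mem_bot] at hzB
      · rw [codisjoint_iff, sup_assoc, sup_comm B (n ⊓ B'), inf_sup_assoc_of_le B' hBn,
          sup_comm B' B, codisjoint_iff.mp hBB'.codisjoint, inf_top_eq,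
          codisjoint_iff.mp hcompl.codisjoint]
    have hlt : n ⊓ B' < n := by
      rcases lt_or_eq_of_le (inf_le_left : n ⊓ B' ≤ n) with h' | h'
      · exact h'
      · exfalso
        have hBle : B ≤ B' := le_trans hBn (by rw [← h']; exact inf_le_right)
        exact hB.1 (le_bot_iff.mp (hBB'.disjoint le_rfl hBle))
    exact absurd hlt (hmin _ ⟨s ⊔ B, hs', hnew⟩)

lemma baer_of_semisimple_quotient (hvnr : ∀ r : R, ∃ s : R, r * s * r = r)
    (W : Type u) [AddCommGroup W] [Module R W]
    (hss : IsSemisimpleModule R (R ⧸ (Module.annihilator R W : Submodule R R))) :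
    Module.Baer R W := by
  intro I g
  set P : Submodule R R := (Module.annihilator R W : Submodule R R) with hPdef
  set mk : ↥I →ₗ[R] R ⧸ P := P.mkQ ∘ₗ I.subtype with hmk
  have hker : LinearMap.ker mk ≤ LinearMap.ker g := by
    intro x hx
    have hxP : (x : R) ∈ P := by
      simpa [hmk, Submodule.Quotient.mk_eq_zero, Ideal.Quotient.eq_zero_iff_mem] using hx
    obtain ⟨y, hy⟩ := hvnr (x : R)
    have hxy : (x : R) * y ∈ Module.annihilator R W := ann_mul_mem' hxP y
    have hxx : ((x : R) * y) • x = x := by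
      ext; rw [SetLike.val_smul, smul_eq_mul]; exact hy
    rw [LinearMap.mem_ker, ← hxx, map_smul, Module.mem_annihilator.mp hxy]
  set g₁ : (↥I ⧸ LinearMap.ker mk) →ₗ[R] W := (LinearMap.ker mk).liftQ g hker with hg₁
  set eq : (↥I ⧸ LinearMap.ker mk) ≃ₗ[R] LinearMap.range mk := LinearMap.quotKerEquivRange mk
  haveI := hss
  obtain ⟨c, hc⟩ := exists_isCompl (LinearMap.range mk)
  set π := Submodule.linearProjOfIsCompl _ _ hc
  refine ⟨g₁ ∘ₗ (eq.symm : _ →ₗ[R] _) ∘ₗ π ∘ₗ P.mkQ, fun x hx => ?_⟩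
  have h1 : P.mkQ x = mk ⟨x, hx⟩ := rfl
  have h2 : π (P.mkQ x) = ⟨mk ⟨x, hx⟩, LinearMap.mem_range_self mk ⟨x, hx⟩⟩ := by
    rw [h1]
    exact Submodule.linearProjOfIsCompl_apply_left hc ⟨mk ⟨x, hx⟩, LinearMap.mem_range_self _ _⟩
  have h3 : eq.symm ⟨mk ⟨x, hx⟩, LinearMap.mem_range_self mk ⟨x, hx⟩⟩
      = (LinearMap.ker mk).mkQ ⟨x, hx⟩ := mk.quotKerEquivRange_symm_apply_image ⟨x, hx⟩ _
  simp only [LinearMap.comp_apply, LinearEquiv.coe_coe, h2]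
  rw [h3]
  exact Submodule.liftQ_apply _ g ⟨x, hx⟩

lemma smul_finset_sup_eq_zero {Q : Type u} [AddCommGroup Q] [Module R Q] {r : R}
    {t : Finset (Submodule R Q)} (hann : ∀ i ∈ t, ∀ x ∈ i, r • x = (0 : Q)) :
    ∀ m ∈ t.sup id, r • m = (0 : Q) := by
  classical
  induction t using Finset.induction_on with
  | empty => intro m hm; simp only [Finset.sup_empty, Submodule.mem_bot] at hm; simp [hm]
  | @insert a u ha ih =>
    intro m hm
    rw [Finset.sup_insert] at hm
    obtain ⟨y, hy, z, hz, rfl⟩ := Submodule.mem_sup.mp hm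
    rw [smul_add, hann a (Finset.mem_insert_self a u) y hy,
      ih (fun i hi => hann i (Finset.mem_insert_of_mem hi)) z hz, add_zero]

lemma artinian_quotient_ann_finset_sup {Q : Type u} [AddCommGroup Q] [Module R Q]
    (t : Finset (Submodule R Q))
    (hart : ∀ i : t, IsArtinian R
      (R ⧸ (Module.annihilator R ↥(i : Submodule R Q) : Submodule R R))) :
    IsArtinian R (R ⧸ (Module.annihilator R ↥(t.sup id) : Submodule R R)) := by
  classical
  set P : Submodule R R := (Module.annihilator R ↥(t.sup id) : Submodule R R)
  set F₀ : R →ₗ[R] ∀ i : t, R ⧸ (Module.annihilator R ↥(i : Submodule R Q) : Submodule R R) :=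
    LinearMap.pi fun i => (Module.annihilator R ↥(i : Submodule R Q) : Submodule R R).mkQ
    with hF₀
  have hPker : P ≤ LinearMap.ker F₀ := by
    intro r hr
    have hr' : ∀ x ∈ t.sup id, r • x = (0 : Q) := fun x hx =>
      congrArg Subtype.val (Module.mem_annihilator.mp hr ⟨x, hx⟩)
    rw [LinearMap.mem_ker]
    funext i
    have hmem : r ∈ (Module.annihilator R ↥(i : Submodule R Q) : Submodule R R) := by
      rw [Module.mem_annihilator]
      intro m
      exact Subtype.ext (hr' m (Finset.le_sup (f := id) i.2 m.2))
    simpa [hF₀, Submodule.Quotient.mk_eq_zero, Ideal.Quotient.eq_zero_iff_mem] using hmem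
  have hFinj : Function.Injective (P.liftQ F₀ hPker) := by
    rw [← LinearMap.ker_eq_bot, Submodule.ker_liftQ_eq_bot]
    intro r hr
    rw [LinearMap.mem_ker] at hr
    have hann : ∀ i ∈ t, ∀ x ∈ i, r • x = (0 : Q) := by
      intro i hi x hx
      have h := congrFun hr ⟨i, hi⟩
      simp only [hF₀, LinearMap.pi_apply, Submodule.mkQ_apply, Pi.zero_apply,
        Submodule.Quotient.mk_eq_zero] at h
      exact congrArg Subtype.val (Module.mem_annihilator.mp h ⟨x, hx⟩)
    rw [Module.mem_annihilator]
    rintro ⟨m, hm⟩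
    exact Subtype.ext (smul_finset_sup_eq_zero hann m hm)
  exact isArtinian_of_injective _ hFinj

lemma isNoetherian_of_isAtom {Q : Type u} [AddCommGroup Q] [Module R Q]
    {m : Submodule R Q} (h : IsAtom m) : IsNoetherian R ↥m := by
  haveI : IsSimpleModule R ↥m := isSimpleModule_iff_isAtom.mpr h
  haveI : Finite (Submodule R ↥m) := Finite.of_surjective (fun b : Bool => if b then ⊤ else ⊥)
    (fun x => by rcases eq_bot_or_eq_top x with rfl | rfl; exacts [⟨false, rfl⟩, ⟨true, rfl⟩])
  exact isNoetherian_mk inferInstance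

lemma isNoetherian_finset_sup_of_atoms {Q : Type u} [AddCommGroup Q] [Module R Q]
    (t : Finset (Submodule R Q)) (h : ∀ i ∈ t, IsAtom i) :
    IsNoetherian R ↥(t.sup id) := by
  classical
  induction t using Finset.induction_on with
  | empty =>
    rw [Finset.sup_empty]
    infer_instance
  | @insert a u ha ih =>
    rw [Finset.sup_insert, id_eq]
    haveI := isNoetherian_of_isAtom (h a (Finset.mem_insert_self a u))
    haveI := ih (fun i hi => h i (Finset.mem_insert_of_mem hi))
    exact isNoetherian_sup _ _

lemma loewy_succ (M : Type u) [AddCommGroup M] [Module R M] (o : Ordinal.{u}) :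
    loewy R M (o + 1) = (socle R (M ⧸ loewy R M o)).comap (loewy R M o).mkQ := by
  rw [loewy, Ordinal.add_one_eq_succ, Ordinal.limitRecOn_succ]
  rfl

lemma loewyLayer_eq_socle (α : Ordinal.{u}) :
    loewyLayer R α = socle R (R ⧸ loewy R R α) := by
  rw [loewyLayer, loewy_succ, Submodule.map_comap_eq_of_surjective (loewy R R α).mkQ_surjective]

end Aux

/-- Over a semiartinian von Neumann regular ring with primitive factors artinian, the class of
weakly `R`-projective modules is closed under submodules. -/
theorem isWeaklyRProjective_submodule
    (R : Type u) [Ring R] (hsa : IsSemiartinianRing R)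
    (hvnr : IsVonNeumannRegularRing R) (hpfa : HasPrimitiveFactorsArtinian R)
    (M : Type u) [AddCommGroup M] [Module R M]
    (hM : IsWeaklyRProjective R M) (N : Submodule R M) :
    IsWeaklyRProjective R N := by
  intro α hα φ hφ
  classical
  have hLayer : loewyLayer R α = socle R (R ⧸ loewy R R α) := loewyLayer_eq_socle α
  set φQ : ↥N →ₗ[R] R ⧸ loewy R R α := (loewyLayer R α).subtype ∘ₗ φ with hφQ
  have hfgQ : (LinearMap.range φQ).FG := by
    rw [hφQ, LinearMap.range_comp]; exact hφ.map _
  have hle : LinearMap.range φQ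
      ≤ sSup {S : Submodule R (R ⧸ loewy R R α) | IsAtom S} := by
    rintro x ⟨n, rfl⟩
    exact hLayer.le (φ n).2
  obtain ⟨t, hts, hTB⟩ := (CompleteLattice.isCompactElement_iff_exists_le_sSup_of_le_sSup _ _).mp
    ((Submodule.fg_iff_compact _).mp hfgQ) _ hle
  have hatoms : ∀ i ∈ t, IsAtom i := fun i hi => hts hi
  have hBL : t.sup id ≤ loewyLayer R α := by
    rw [hLayer]
    exact Finset.sup_le fun i hi => le_sSup (hts hi)
  -- Baer criterion for ↥(t.sup id)
  have hart : ∀ i : t, IsArtinian R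
      (R ⧸ (Module.annihilator R ↥(i : Submodule R (R ⧸ loewy R R α)) : Submodule R R)) :=
    fun i => hpfa _ (isSimpleModule_iff_isAtom.mpr (hatoms i i.2))
  haveI hartP := artinian_quotient_ann_finset_sup t hart
  have hssP : IsSemisimpleModule R
      (R ⧸ (Module.annihilator R ↥(t.sup id) : Submodule R R)) :=
    isSemisimpleModule_of_cyclic_isCompl _
      (cyclic_isCompl hvnr _ (fun p hp s => ann_mul_mem' hp s))
  have hBaer : Module.Baer R ↥(t.sup id) :=
    baer_of_semisimple_quotient hvnr _ hssP
  -- extend φ to M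
  have hmemB : ∀ n, φQ n ∈ t.sup id := fun n => hTB ⟨n, rfl⟩
  set φ' : ↥N →ₗ[R] ↥(t.sup id) := LinearMap.codRestrict _ φQ hmemB with hφ'
  obtain ⟨Φ, hΦ⟩ := hBaer.extension_property N.subtype N.injective_subtype φ'
  set Φ' : M →ₗ[R] ↥(loewyLayer R α) := (Submodule.inclusion hBL) ∘ₗ Φ with hΦ'
  have hΦ'fg : (LinearMap.range Φ').FG := by
    rw [hΦ', LinearMap.range_comp]
    haveI := isNoetherian_finset_sup_of_atoms t hatoms
    exact (IsNoetherian.noetherian _).map _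
  obtain ⟨ψM, hψM⟩ := hM α hα Φ' hΦ'fg
  refine ⟨ψM ∘ₗ N.subtype, ?_⟩
  refine LinearMap.ext fun n => ?_
  have h1 := LinearMap.congr_fun hψM (N.subtype n)
  have h2 := LinearMap.congr_fun hΦ n
  simp only [LinearMap.comp_apply] at h1 h2 ⊢
  rw [h1]
  apply Subtype.ext
  show ((Submodule.inclusion hBL) (Φ (N.subtype n)) : R ⧸ loewy R R α) = (φ n : _)
  rw [h2]
  rfl
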